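/- The set of Nuij sequences N_d ⊂ ℝ^d equals b_d^{-1}(H₁^d), where b_d(a₁,…,a_d) = (d·a₁, …, (d!/(d-k)!)·a_k, …, d!·a_d) and H₁^d is the set of (b₁,…,b_d) ∈ ℝ^d such that z^d + Σ b_k z^{d-k} has only real roots. -/

import Mathlib

open Polynomial

/-- A real polynomial is hyperbolic if all its complex roots are real. -/
def Hyperbolic (p : Polynomial ℝ) : Prop :=
  ∀ z : ℂ, Polynomial.aeval z p = 0 → z.im = 0

/-- The perturbed polynomial `p_a(·, s) = p + ∑_{k=1}^d a_k s^k p^{(k)}`. -/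
noncomputable def NuijPencil (d : ℕ) (a : ℕ → ℝ) (p : Polynomial ℝ) (s : ℝ) : Polynomial ℝ :=
  p + ∑ k ∈ Finset.Icc 1 d, (a k * s ^ k) • (Polynomial.derivative^[k] p)

/-- `(a₁, …, a_d)` is a Nuij sequence. -/
def IsNuijSeq (d : ℕ) (a : ℕ → ℝ) : Prop :=
  ∀ p : Polynomial ℝ, p.natDegree = d → Hyperbolic p →
    ∀ s : ℝ, Hyperbolic (NuijPencil d a p s)

/- ### Auxiliary development -/

noncomputable def NuijPhi (n : ℕ) (q p : Polynomial ℂ) (z : ℂ) : ℂ :=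
  ∑ k ∈ Finset.range (n+1),
    q.coeff (n - k) * (Nat.factorial (n - k) : ℂ) * Polynomial.eval z (Polynomial.derivative^[k] p)

noncomputable def polarStep (n : ℕ) (v : ℂ) (q : Polynomial ℂ) : Polynomial ℂ :=
  Polynomial.C ((n : ℂ) + 1) * q + (Polynomial.C v - Polynomial.X) * Polynomial.derivative q

lemma iter_deriv_linear_mul (r : ℂ) (p : Polynomial ℂ) (k : ℕ) :
    Polynomial.derivative^[k+1] ((X - C r) * p)
      = (X - C r) * Polynomial.derivative^[k+1] p
        + Polynomial.C ((k:ℂ)+1) * Polynomial.derivative^[k] p := by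
  induction k with
  | zero =>
    simp only [zero_add, Function.iterate_one, Nat.cast_zero]
    rw [derivative_mul, derivative_sub, derivative_X, derivative_C]
    norm_num
    ring
  | succ k ih =>
    have h1 : Polynomial.derivative^[k+1+1] ((X - C r)*p)
        = Polynomial.derivative ((X - C r) * Polynomial.derivative^[k+1] p
            + Polynomial.C ((k:ℂ)+1) * Polynomial.derivative^[k] p) := by
      rw [Function.iterate_succ_apply', ih]
    rw [h1, derivative_add, derivative_mul, derivative_C_mul, derivative_sub,
      derivative_X, derivative_C]
    rw [← Function.iterate_succ_apply' Polynomial.derivative (k+1) p,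
      ← Function.iterate_succ_apply' Polynomial.derivative k p]
    push_cast
    simp only [map_add, map_one]
    ring


lemma polarStep_coeff (n : ℕ) (v : ℂ) (q : Polynomial ℂ) (i : ℕ) :
    (polarStep n v q).coeff i
      = ((n:ℂ) + 1 - (i:ℂ)) * q.coeff i + v * ((i:ℂ)+1) * q.coeff (i+1) := by
  rw [polarStep]
  rw [coeff_add, coeff_C_mul, sub_mul, coeff_sub, coeff_C_mul, coeff_derivative]
  cases i with
  | zero => rw [mul_coeff_zero, coeff_X_zero, coeff_derivative]; push_cast; ring
  | succ i => rw [coeff_X_mul, coeff_derivative]; push_cast; ring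

lemma nuijPhi_step (d : ℕ) (q p₁ : Polynomial ℂ) (r z : ℂ) (hp : p₁.natDegree ≤ d) :
    NuijPhi (d+1) q ((X - C r) * p₁) z = NuijPhi d (polarStep d (z - r) q) p₁ z := by
  have hD : ∀ k : ℕ, Polynomial.eval z (Polynomial.derivative^[k] ((X - C r) * p₁))
      = (z - r) * Polynomial.eval z (Polynomial.derivative^[k] p₁)
        + (k:ℂ) * Polynomial.eval z (Polynomial.derivative^[k-1] p₁) := by
    intro k
    cases k with
    | zero => simp
    | succ k =>
      rw [iter_deriv_linear_mul, eval_add, eval_mul, eval_mul, eval_C, eval_sub, eval_X, eval_C]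
      push_cast
      simp only [Nat.add_sub_cancel]
  unfold NuijPhi
  have hsplit : ∀ k ∈ Finset.range (d+2),
      q.coeff (d+1-k) * (Nat.factorial (d+1-k) : ℂ)
          * Polynomial.eval z (Polynomial.derivative^[k] ((X - C r) * p₁))
        = q.coeff (d+1-k) * (Nat.factorial (d+1-k) : ℂ)
            * ((z - r) * Polynomial.eval z (Polynomial.derivative^[k] p₁))
          + q.coeff (d+1-k) * (Nat.factorial (d+1-k) : ℂ)
            * ((k:ℂ) * Polynomial.eval z (Polynomial.derivative^[k-1] p₁)) := by
    intro k _
    rw [hD k]; ring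
  rw [Finset.sum_congr rfl hsplit, Finset.sum_add_distrib]
  -- first sum : last term vanishes
  have hlast : q.coeff (d+1-(d+1)) * (Nat.factorial (d+1-(d+1)) : ℂ)
      * ((z - r) * Polynomial.eval z (Polynomial.derivative^[d+1] p₁)) = 0 := by
    rw [Polynomial.iterate_derivative_eq_zero (by omega : p₁.natDegree < d+1)]
    simp
  rw [show d+2 = (d+1)+1 from rfl,
    Finset.sum_range_succ (fun k => q.coeff (d+1-k) * (Nat.factorial (d+1-k) : ℂ)
      * ((z - r) * Polynomial.eval z (Polynomial.derivative^[k] p₁))) (d+1),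
    hlast, add_zero,
    Finset.sum_range_succ' (fun k => q.coeff (d+1-k) * (Nat.factorial (d+1-k) : ℂ)
      * ((k:ℂ) * Polynomial.eval z (Polynomial.derivative^[k-1] p₁))) (d+1)]
  norm_num
  rw [← Finset.sum_add_distrib]
  apply Finset.sum_congr rfl
  intro k hk
  have hkd : k ≤ d := by simpa [Nat.lt_succ_iff] using hk
  rw [polarStep_coeff]
  have h1 : d + 1 - k = (d - k) + 1 := by omega
  have h2 : d + 1 - (k+1) = d - k := by omega
  rw [h1, h2, Nat.factorial_succ]
  have h3 : ((d - k : ℕ) : ℂ) = (d:ℂ) - (k:ℂ) := by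
    push_cast [Nat.cast_sub hkd]; ring
  push_cast [h3]
  ring

lemma perRoot (y v r : ℂ) (hy : 0 < y.im) (hv : 0 < v.im) (hr : r.im ≤ 0) :
    v.im ≤ (((v - r)/(y - r)) * (starRingEnd ℂ) (Complex.mk (v.im + y.im) (y.re - v.re))).re := by
  have hyr : y - r ≠ 0 := by
    intro h
    have h2 : (y - r).im = 0 := by rw [h]; simp
    rw [Complex.sub_im] at h2
    linarith
  have hN : (0:ℝ) < Complex.normSq (y - r) := Complex.normSq_pos.mpr hyr
  have hkey : ((v - r)/(y - r)) * (starRingEnd ℂ) (Complex.mk (v.im + y.im) (y.re - v.re))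
      = (((Complex.normSq (y-r))⁻¹ : ℝ) : ℂ)
        * ((v - r) * (starRingEnd ℂ) (y - r) * (starRingEnd ℂ) (Complex.mk (v.im + y.im) (y.re - v.re))) := by
    have hmc : ((Complex.normSq (y-r) : ℝ) : ℂ) = (y - r) * (starRingEnd ℂ) (y - r) :=
      (Complex.mul_conj _).symm
    field_simp [hyr]
    have hc : (starRingEnd ℂ) (y - r) ≠ 0 := (_root_.map_ne_zero _).mpr hyr
    rw [Complex.ofReal_div, Complex.ofReal_one, hmc]
    field_simp
  rw [hkey, Complex.re_ofReal_mul, inv_mul_eq_div, le_div_iff₀ hN]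
  simp only [Complex.mul_re, Complex.mul_im, Complex.sub_re, Complex.sub_im,
    Complex.conj_re, Complex.conj_im, Complex.normSq_apply]
  nlinarith [mul_nonneg hy.le (add_nonneg (sq_nonneg (v.re - r.re)) (sq_nonneg (v.im - r.im))),
    mul_nonpos_of_nonpos_of_nonneg hr
      (add_nonneg (sq_nonneg (y.re - v.re)) (sq_nonneg (y.im - v.im)))]

lemma sum_ne_zero_of_roots (M : Multiset ℂ) (hM : M ≠ 0) (hroots : ∀ r ∈ M, r.im ≤ 0)
    (y v : ℂ) (hy : 0 < y.im) (hv : 0 < v.im) :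
    (M.map (fun r => (v - r)/(y - r))).sum ≠ 0 := by
  intro hzero
  set κ := Complex.mk (v.im + y.im) (y.re - v.re) with hκ
  have hms : (M.map (fun r => ((v - r)/(y - r)) * (starRingEnd ℂ) κ)).sum
      = (M.map (fun r => (v - r)/(y - r))).sum * (starRingEnd ℂ) κ :=
    Multiset.sum_map_mul_right
  have hre : ((M.map (fun r => ((v - r)/(y - r)) * (starRingEnd ℂ) κ)).sum).re
      = (M.map (fun r => (((v - r)/(y - r)) * (starRingEnd ℂ) κ).re)).sum := by
    have h := map_multiset_sum Complex.reAddGroupHom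
      (M.map (fun r => ((v - r)/(y - r)) * (starRingEnd ℂ) κ))
    simpa [Multiset.map_map, Complex.reAddGroupHom] using h
  have hlow : (Multiset.card M) • v.im
      ≤ (M.map (fun r => (((v - r)/(y - r)) * (starRingEnd ℂ) κ).re)).sum := by
    have := Multiset.card_nsmul_le_sum (s := M.map (fun r => (((v - r)/(y - r)) * (starRingEnd ℂ) κ).re))
      (a := v.im) ?_
    · simpa using this
    · intro x hx
      obtain ⟨r, hr, rfl⟩ := Multiset.mem_map.mp hx
      exact perRoot y v r hy hv (hroots r hr)
  have hcard : 0 < Multiset.card M := Multiset.card_pos.mpr hM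
  have hpos : 0 < (Multiset.card M : ℝ) * v.im := by positivity
  rw [← hre, hms, hzero, zero_mul, nsmul_eq_mul] at hlow
  simp only [Complex.zero_re] at hlow
  linarith

lemma eval_polar_prod (M : Multiset ℂ) (y v : ℂ) (hy : ∀ r ∈ M, y ≠ r) :
    Polynomial.eval y (Polynomial.C (Multiset.card M : ℂ) * (M.map (fun r => X - C r)).prod
        + (Polynomial.C v - Polynomial.X) * Polynomial.derivative (M.map (fun r => X - C r)).prod)
      = Polynomial.eval y (M.map (fun r => X - C r)).prod
        * (M.map (fun r => (v - r)/(y - r))).sum := by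
  revert hy
  induction M using Multiset.induction_on with
  | empty => simp
  | cons a M ih =>
    intro hy
    have hw : y - a ≠ 0 := sub_ne_zero.mpr (hy a (Multiset.mem_cons_self a M))
    have ihe := ih (fun r hr => hy r (Multiset.mem_cons_of_mem hr))
    simp only [Multiset.map_cons, Multiset.prod_cons, Multiset.sum_cons, Multiset.card_cons,
      derivative_mul, derivative_sub, derivative_X, derivative_C, sub_zero, one_mul,
      eval_add, eval_mul, eval_sub, eval_C, eval_X, Nat.cast_add, Nat.cast_one] at ihe ⊢
    have expand : ((Multiset.card M : ℂ) + 1) * ((y - a) * Polynomial.eval y (M.map (fun r => X - C r)).prod)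
        + (v - y) * (Polynomial.eval y (M.map (fun r => X - C r)).prod
            + (y - a) * Polynomial.eval y (Polynomial.derivative (M.map (fun r => X - C r)).prod))
        = (y - a) * ((Multiset.card M : ℂ) * Polynomial.eval y (M.map (fun r => X - C r)).prod
            + (v - y) * Polynomial.eval y (Polynomial.derivative (M.map (fun r => X - C r)).prod))
          + (v - a) * Polynomial.eval y (M.map (fun r => X - C r)).prod := by
      ring
    rw [expand, ihe]
    field_simp
    ring

lemma laguerre_step (n : ℕ) (q : Polynomial ℂ) (hdeg : q.natDegree = n + 1)
    (hH : ∀ y : ℂ, 0 < y.im → Polynomial.eval y q ≠ 0) (v : ℂ) (hv : 0 < v.im) :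
    (polarStep n v q).natDegree = n ∧
      (∀ y : ℂ, 0 < y.im → Polynomial.eval y (polarStep n v q) ≠ 0) := by
  have hq0 : q ≠ 0 := fun h => by simp [h] at hdeg
  have hsp : q.Splits := IsAlgClosed.splits q
  set M := q.roots with hM
  set c := q.leadingCoeff with hc
  have hcard : Multiset.card M = n + 1 := by
    rw [hM, Polynomial.splits_iff_card_roots.mp hsp, hdeg]
  have hfac : q = C c * (M.map (fun a => X - C a)).prod :=
    hsp.eq_prod_roots
  have hroots : ∀ μ ∈ M, μ.im ≤ 0 := by
    intro μ hμ
    by_contra h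
    push_neg at h
    exact hH μ h ((Polynomial.mem_roots'.mp hμ).2)
  have hlc : c ≠ 0 := Polynomial.leadingCoeff_ne_zero.mpr hq0
  have hps : polarStep n v q
      = C c * (Polynomial.C ((Multiset.card M : ℂ))
          * (M.map (fun a => X - C a)).prod
        + (Polynomial.C v - Polynomial.X)
          * Polynomial.derivative (M.map (fun a => X - C a)).prod) := by
    rw [polarStep]
    conv_lhs => rw [hfac]
    rw [Polynomial.derivative_C_mul, hcard]
    push_cast
    ring
  -- nonvanishing
  have hnv : ∀ y : ℂ, 0 < y.im → Polynomial.eval y (polarStep n v q) ≠ 0 := by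
    intro y hy
    have hne : ∀ r ∈ M, y ≠ r := by
      intro r hr h
      have := hroots r hr
      rw [h] at hy
      linarith
    rw [hps, eval_mul, eval_C, eval_polar_prod _ y v hne]
    have hprod : Polynomial.eval y (M.map (fun a => X - C a)).prod ≠ 0 := by
      rw [Polynomial.eval_multiset_prod]
      apply Multiset.prod_ne_zero
      intro h0
      rw [Multiset.map_map] at h0
      obtain ⟨r, hr, hr0⟩ := Multiset.mem_map.mp h0
      simp only [Function.comp_apply, eval_sub, eval_X, eval_C] at hr0
      exact hne r hr (sub_eq_zero.mp hr0)
    have hMne : M ≠ 0 := by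
      intro h
      rw [h] at hcard
      simp at hcard
    exact mul_ne_zero hlc (mul_ne_zero hprod
      (sum_ne_zero_of_roots M hMne hroots y v hy hv))
  -- coefficient n
  have esymm1 : M.esymm 1 = M.sum := by
    simp [Multiset.esymm, Multiset.powersetCard_one, Multiset.map_map, Function.comp]
  have hcoeffn : q.coeff n = c * (- M.sum) := by
    conv_lhs => rw [hfac]
    rw [Polynomial.coeff_C_mul,
      Multiset.prod_X_sub_C_coeff M (by omega : n ≤ Multiset.card M), hcard]
    simp [esymm1]
  have hsumim : (M.map Complex.im).sum ≤ 0 := by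
    have haux : ∀ (m : Multiset ℂ), (∀ r ∈ m, r.im ≤ 0) → (m.map Complex.im).sum ≤ 0 := by
      intro m
      induction m using Multiset.induction_on with
      | empty => simp
      | cons a s ih =>
        intro h
        rw [Multiset.map_cons, Multiset.sum_cons]
        have h1 := h a (Multiset.mem_cons_self a s)
        have h2 := ih (fun r hr => h r (Multiset.mem_cons_of_mem hr))
        linarith
    exact haux M hroots
  have hrootsum_im : (M.sum).im ≤ 0 := by
    rw [show (M.sum).im = Complex.imAddGroupHom M.sum from rfl, map_multiset_sum]
    simpa [Complex.imAddGroupHom] using hsumim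
  have h1 : q.coeff (n+1) = c := by rw [hc, ← hdeg, Polynomial.coeff_natDegree]
  have hcoeffne : (polarStep n v q).coeff n ≠ 0 := by
    rw [polarStep_coeff, hcoeffn, h1]
    have heq : ((n:ℂ) + 1 - (n:ℂ)) * (c * (- M.sum)) + v * ((n:ℂ)+1) * c
        = c * (((n:ℂ)+1) * v - M.sum) := by ring
    rw [heq]
    apply mul_ne_zero hlc
    intro h
    have him := congrArg Complex.im h
    simp only [Complex.sub_im, Complex.mul_im, Complex.add_im, Complex.add_re,
      Complex.natCast_im, Complex.natCast_re, Complex.one_im, Complex.one_re,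
      Complex.zero_im] at him
    have hn0 : (0:ℝ) ≤ (n:ℝ) := Nat.cast_nonneg n
    nlinarith
  have hub : (polarStep n v q).natDegree ≤ n := by
    rw [Polynomial.natDegree_le_iff_coeff_eq_zero]
    intro N hN
    rw [polarStep_coeff]
    have hz2 : q.coeff (N+1) = 0 :=
      Polynomial.coeff_eq_zero_of_natDegree_lt (by omega)
    rcases eq_or_lt_of_le (show n+1 ≤ N by omega) with h|h
    · rw [hz2, ← h]
      push_cast
      ring
    · rw [hz2, Polynomial.coeff_eq_zero_of_natDegree_lt (by omega)]
      ring
  exact ⟨le_antisymm hub (Polynomial.le_natDegree_of_ne_zero hcoeffne), hnv⟩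

lemma nuijPhi_ne_zero : ∀ (d : ℕ) (q p : Polynomial ℂ) (z : ℂ), 0 < z.im →
    q.natDegree = d → (∀ y : ℂ, 0 < y.im → Polynomial.eval y q ≠ 0) →
    p.natDegree = d → (∀ y : ℂ, 0 < y.im → Polynomial.eval y p ≠ 0) →
    NuijPhi d q p z ≠ 0 := by
  intro d
  induction d with
  | zero =>
    intro q p z hz hq hqH hp hpH
    have h1 : Polynomial.eval z q ≠ 0 := hqH z hz
    rw [Polynomial.eq_C_of_natDegree_eq_zero hq, eval_C] at h1
    have h2 : Polynomial.eval z p ≠ 0 := hpH z hz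
    simp only [NuijPhi, zero_add, Finset.sum_range_one, Nat.sub_zero, Nat.factorial_zero,
      Function.iterate_zero_apply, Nat.cast_one, mul_one]
    exact mul_ne_zero (by simpa using h1) h2
  | succ d ih =>
    intro q p z hz hq hqH hp hpH
    have hp0 : 0 < p.degree := by
      rw [← Polynomial.natDegree_pos_iff_degree_pos, hp]
      omega
    obtain ⟨r, hr⟩ := Complex.exists_root hp0
    obtain ⟨p₁, hp₁⟩ := Polynomial.dvd_iff_isRoot.mpr hr
    have hrim : r.im ≤ 0 := by
      by_contra h
      push_neg at h
      exact hpH r h hr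
    have hpne : p ≠ 0 := fun h => by simp [h] at hp
    have hp₁ne : p₁ ≠ 0 := by
      rintro rfl
      rw [mul_zero] at hp₁
      exact hpne hp₁
    have hdeg₁ : p₁.natDegree = d := by
      have hXC : (X - C r : Polynomial ℂ) ≠ 0 := Polynomial.X_sub_C_ne_zero r
      have hmul := Polynomial.natDegree_mul hXC hp₁ne
      rw [← hp₁, hp, Polynomial.natDegree_X_sub_C] at hmul
      omega
    have hpH₁ : ∀ y : ℂ, 0 < y.im → Polynomial.eval y p₁ ≠ 0 := by
      intro y hy h
      apply hpH y hy
      rw [hp₁, eval_mul, h, mul_zero]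
    have hv : 0 < (z - r).im := by
      rw [Complex.sub_im]
      linarith
    obtain ⟨hdQ, hQH⟩ := laguerre_step d q hq hqH (z - r) hv
    rw [hp₁, nuijPhi_step d q p₁ r z (le_of_eq hdeg₁)]
    exact ih (polarStep d (z-r) q) p₁ z hz hdQ hQH hdeg₁ hpH₁

noncomputable def nuijQ (d : ℕ) (b : ℕ → ℝ) : Polynomial ℝ :=
  X^d + ∑ k ∈ Finset.Icc 1 d, C (b k) * X^(d-k)

noncomputable def nuijQC (d : ℕ) (b : ℕ → ℂ) : Polynomial ℂ :=
  X^d + ∑ k ∈ Finset.Icc 1 d, C (b k) * X^(d-k)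

lemma nuijQC_map (d : ℕ) (b : ℕ → ℝ) :
    (nuijQ d b).map (algebraMap ℝ ℂ) = nuijQC d (fun k => ((b k : ℝ) : ℂ)) := by
  simp [nuijQ, nuijQC, Polynomial.map_add, Polynomial.map_pow, Polynomial.map_X,
    Polynomial.map_sum, Polynomial.map_mul, Polynomial.map_C, Complex.coe_algebraMap]

lemma nuijQC_sum_degree_lt (d : ℕ) (b : ℕ → ℂ) :
    (∑ k ∈ Finset.Icc 1 d, C (b k) * X^(d-k) : Polynomial ℂ).degree < (d : ℕ) := by
  apply lt_of_le_of_lt (Polynomial.degree_sum_le _ _)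
  rw [Finset.sup_lt_iff (by exact_mod_cast WithBot.bot_lt_coe d)]
  intro k hk
  obtain ⟨hk1, hkd⟩ := Finset.mem_Icc.mp hk
  apply lt_of_le_of_lt (Polynomial.degree_C_mul_X_pow_le _ _)
  exact_mod_cast Nat.cast_lt.mpr (by omega : d - k < d)

lemma nuijQC_monic (d : ℕ) (b : ℕ → ℂ) : (nuijQC d b).Monic := by
  rw [nuijQC]
  exact Polynomial.monic_X_pow_add (nuijQC_sum_degree_lt d b)

lemma nuijQC_natDegree (d : ℕ) (b : ℕ → ℂ) : (nuijQC d b).natDegree = d := by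
  rw [nuijQC]
  have h1 : (∑ k ∈ Finset.Icc 1 d, C (b k) * X^(d-k) : Polynomial ℂ).degree
      < (X^d : Polynomial ℂ).degree := by
    rw [Polynomial.degree_X_pow]
    exact nuijQC_sum_degree_lt d b
  have h2 := Polynomial.degree_add_eq_left_of_degree_lt h1
  rw [Polynomial.degree_X_pow] at h2
  exact Polynomial.natDegree_eq_of_degree_eq_some h2

lemma nuijQC_coeff_top (d : ℕ) (b : ℕ → ℂ) : (nuijQC d b).coeff d = 1 := by
  have h := (nuijQC_monic d b).coeff_natDegree
  rwa [nuijQC_natDegree] at h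

lemma nuijQC_coeff (d : ℕ) (b : ℕ → ℂ) (j : ℕ) (hj : j ∈ Finset.Icc 1 d) :
    (nuijQC d b).coeff (d - j) = b j := by
  obtain ⟨hj1, hjd⟩ := Finset.mem_Icc.mp hj
  rw [nuijQC, coeff_add, coeff_X_pow, if_neg (by omega : ¬ (d - j = d)),
    Polynomial.finset_sum_coeff]
  rw [Finset.sum_eq_single j]
  · rw [coeff_C_mul, coeff_X_pow, if_pos rfl, mul_one, zero_add]
  · intro k hk hkj
    obtain ⟨hk1, hkd⟩ := Finset.mem_Icc.mp hk
    rw [coeff_C_mul, coeff_X_pow, if_neg (by omega : ¬ (d - j = d - k)), mul_zero]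
  · intro h
    exact absurd hj h

lemma nuijQC_eval (d : ℕ) (b : ℕ → ℂ) (w : ℂ) :
    Polynomial.eval w (nuijQC d b) = w^d + ∑ k ∈ Finset.Icc 1 d, b k * w^(d-k) := by
  simp [nuijQC, Polynomial.eval_finset_sum]

lemma nuijQ_scaled_ne (d : ℕ) (a : ℕ → ℝ) (s : ℝ)
    (hQ : Hyperbolic (nuijQ d (fun k => (d.descFactorial k : ℝ) * a k))) :
    ∀ y : ℂ, 0 < y.im →
      Polynomial.eval y ((nuijQ d (fun k => (d.descFactorial k : ℝ) * (a k * s^k))).map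
        (algebraMap ℝ ℂ)) ≠ 0 := by
  intro y hy
  have hy0 : y ≠ 0 := fun h => by rw [h] at hy; simp at hy
  rw [nuijQC_map, nuijQC_eval]
  by_cases hs : s = 0
  · subst hs
    have hz : ∀ k ∈ Finset.Icc 1 d,
        (((d.descFactorial k : ℝ) * (a k * (0:ℝ)^k) : ℝ) : ℂ) * y^(d-k) = 0 := by
      intro k hk
      have hk1 := (Finset.mem_Icc.mp hk).1
      rw [zero_pow (by omega : k ≠ 0)]
      simp
    rw [Finset.sum_eq_zero hz, add_zero]
    exact pow_ne_zero d hy0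
  · set u := y / ((s:ℝ):ℂ) with hu
    have hsne : ((s:ℝ):ℂ) ≠ 0 := Complex.ofReal_ne_zero.mpr hs
    have huim : u.im ≠ 0 := by
      rw [hu, Complex.div_ofReal_im]
      exact div_ne_zero (ne_of_gt hy) hs
    have hne : u^d + ∑ k ∈ Finset.Icc 1 d,
        (((d.descFactorial k : ℝ) * a k : ℝ) : ℂ) * u^(d-k) ≠ 0 := by
      intro h
      apply huim
      apply hQ u
      rw [Polynomial.aeval_def, Polynomial.eval₂_eq_eval_map, nuijQC_map, nuijQC_eval]
      exact h
    intro h0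
    apply hne
    have hid : u^d + ∑ k ∈ Finset.Icc 1 d,
          (((d.descFactorial k : ℝ) * a k : ℝ) : ℂ) * u^(d-k)
        = ((((s:ℝ):ℂ))⁻¹)^d * (y^d + ∑ k ∈ Finset.Icc 1 d,
            (((d.descFactorial k : ℝ) * (a k * s^k) : ℝ) : ℂ) * y^(d-k)) := by
      rw [mul_add, Finset.mul_sum]
      congr 1
      · rw [hu, div_pow, div_eq_mul_inv, mul_comm, inv_pow]
      · apply Finset.sum_congr rfl
        intro k hk
        obtain ⟨hk1, hkd⟩ := Finset.mem_Icc.mp hk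
        have hpow : ((s:ℝ):ℂ)^d = ((s:ℝ):ℂ)^k * ((s:ℝ):ℂ)^(d-k) := by
          rw [← pow_add]
          congr 1
          omega
        rw [hu, div_pow]
        field_simp
        rw [one_div, inv_pow, hpow]
        push_cast
        field_simp
    rw [hid, h0, mul_zero]

lemma phi_eq (d : ℕ) (a : ℕ → ℝ) (s : ℝ) (p : Polynomial ℝ) (z : ℂ) :
    NuijPhi d ((nuijQ d (fun k => (d.descFactorial k : ℝ) * (a k * s^k))).map (algebraMap ℝ ℂ))
        (p.map (algebraMap ℝ ℂ)) z
      = (d.factorial : ℂ) * Polynomial.aeval z (NuijPencil d a p s) := by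
  rw [nuijQC_map, NuijPhi, NuijPencil]
  have hins : Finset.range (d+1) = insert 0 (Finset.Icc 1 d) := by
    ext x
    simp [Finset.mem_Icc, Nat.lt_succ_iff]
    omega
  rw [hins, Finset.sum_insert (by simp), map_add, mul_add]
  congr 1
  · rw [Nat.sub_zero, nuijQC_coeff_top, one_mul, Function.iterate_zero_apply,
      Polynomial.aeval_def, Polynomial.eval₂_eq_eval_map, mul_comm]
  · rw [map_sum, Finset.mul_sum]
    apply Finset.sum_congr rfl
    intro k hk
    obtain ⟨hk1, hkd⟩ := Finset.mem_Icc.mp hk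
    rw [nuijQC_coeff d _ k hk]
    rw [Polynomial.smul_eq_C_mul, map_mul, Polynomial.aeval_C,
      Polynomial.aeval_def, Polynomial.eval₂_eq_eval_map,
      ← Polynomial.iterate_derivative_map]
    have hnat : (Nat.factorial (d-k)) * d.descFactorial k = Nat.factorial d :=
      Nat.factorial_mul_descFactorial hkd
    have hC : ((Nat.factorial (d-k) : ℕ) : ℂ) * ((d.descFactorial k : ℕ) : ℂ)
        = ((Nat.factorial d : ℕ) : ℂ) := by exact_mod_cast hnat
    simp only [Complex.coe_algebraMap]
    push_cast
    linear_combination (((a k : ℂ)) * ((s:ℂ))^k * Polynomial.eval z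
      (Polynomial.derivative^[k] (p.map (algebraMap ℝ ℂ)))) * hC

lemma pencil_Xpow (d : ℕ) (a : ℕ → ℝ) :
    NuijPencil d a (X^d) 1 = nuijQ d (fun k => (d.descFactorial k : ℝ) * a k) := by
  rw [NuijPencil, nuijQ]
  congr 1
  apply Finset.sum_congr rfl
  intro k hk
  rw [Polynomial.iterate_derivative_X_pow_eq_smul, one_pow, mul_one, smul_smul,
    Polynomial.smul_eq_C_mul, mul_comm (a k)]

lemma hyperbolic_Xpow (d : ℕ) : Hyperbolic ((X : Polynomial ℝ)^d) := by
  intro z hz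
  rw [map_pow, Polynomial.aeval_X] at hz
  obtain ⟨rfl, -⟩ := pow_eq_zero_iff'.mp hz
  rfl

theorem nuijSeq_eq_preimage (d : ℕ) (a : ℕ → ℝ) :
    IsNuijSeq d a ↔
      Hyperbolic ((X : Polynomial ℝ) ^ d +
        ∑ k ∈ Finset.Icc 1 d, Polynomial.C ((d.descFactorial k : ℝ) * a k) * X ^ (d - k)) := by
  have hQid : ((X : Polynomial ℝ) ^ d +
      ∑ k ∈ Finset.Icc 1 d, Polynomial.C ((d.descFactorial k : ℝ) * a k) * X ^ (d - k))
      = nuijQ d (fun k => (d.descFactorial k : ℝ) * a k) := rfl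
  rw [hQid]
  constructor
  · intro hN
    have h := hN (X^d) (Polynomial.natDegree_X_pow d) (hyperbolic_Xpow d) 1
    rwa [pencil_Xpow] at h
  · intro hQ
    intro p hpd hp s z hz0
    by_contra him
    have claim : ∀ w : ℂ, 0 < w.im → Polynomial.aeval w (NuijPencil d a p s) ≠ 0 := by
      intro w hw
      have hPdeg : (p.map (algebraMap ℝ ℂ)).natDegree = d := by
        rw [Polynomial.natDegree_map_eq_of_injective (algebraMap ℝ ℂ).injective, hpd]
      have hPH : ∀ y : ℂ, 0 < y.im → Polynomial.eval y (p.map (algebraMap ℝ ℂ)) ≠ 0 := by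
        intro y hy h
        have := hp y (by rw [Polynomial.aeval_def, Polynomial.eval₂_eq_eval_map]; exact h)
        linarith
      have hqdeg : ((nuijQ d (fun k => (d.descFactorial k : ℝ) * (a k * s^k))).map
          (algebraMap ℝ ℂ)).natDegree = d := by
        rw [nuijQC_map, nuijQC_natDegree]
      have hqH := nuijQ_scaled_ne d a s hQ
      have hmain := nuijPhi_ne_zero d _ _ w hw hqdeg hqH hPdeg hPH
      rw [phi_eq] at hmain
      intro h
      rw [h, mul_zero] at hmain
      exact hmain rfl
    rcases lt_or_gt_of_ne him with hneg | hpos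
    · have hconj : Polynomial.aeval ((starRingEnd ℂ) z) (NuijPencil d a p s) = 0 := by
        have h := Polynomial.aeval_algHom_apply (Complex.conjAe) z (NuijPencil d a p s)
        rw [show ((starRingEnd ℂ) z) = Complex.conjAe z from rfl, h, hz0]
        simp
      exact claim ((starRingEnd ℂ) z) (by rw [Complex.conj_im]; linarith) hconj
    · exact claim z hpos hz0
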